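/- Fix a real a > 0, an integer k ≥ 1, a real λ, and an integer m with 0 ≤ m ≤ k−1. Then, with the limit taken over integers n > k tending to infinity, lim_{n→∞} n^{−m}·(d^m/dx^m)Θ_{n,k}(λ;x) evaluated at x = a equals (1 − exp(−λ))^m, where the m-th derivative is that of the smooth function x ↦ Θ_{n,k}(λ;x) on ℝ. -/

import Mathlib

open Filter Finset Topology

/-- `f_{n,ℓ}(y;x)`: the density at `y` of the `ℓ`-th order statistic of `n` i.i.d.
unit-rate exponential random variables conditioned to exceed `x`. -/
noncomputable def amsDensity (n ℓ : ℕ) (x y : ℝ) : ℝ :=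
  (ℓ : ℝ) * (n.choose ℓ) * (1 - Real.exp (-(y - x))) ^ (ℓ - 1) *
    Real.exp (-((n : ℝ) - ℓ + 1) * (y - x))

/-- `F_{n,ℓ}(a;x)`, with the convention `F_{n,0}(a;x) = 1`. -/
noncomputable def amsCDF (n ℓ : ℕ) (a x : ℝ) : ℝ :=
  if ℓ = 0 then 1 else ∫ u in (0 : ℝ)..(a - x), amsDensity n ℓ 0 u

lemma continuous_amsDensity (n ℓ : ℕ) (x : ℝ) : Continuous (amsDensity n ℓ x) := by
  unfold amsDensity
  fun_prop

lemma hasDerivAt_phi (n p : ℕ) (h : p + 1 ≤ n) (u : ℝ) :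
    HasDerivAt (fun u : ℝ => (n.choose (p + 1) : ℝ) *
        ((1 - Real.exp (-u)) ^ (p + 1) * Real.exp (-((n : ℝ) - (p + 1)) * u)))
      (amsDensity n (p + 1) 0 u - amsDensity n (p + 2) 0 u) u := by
  have h1 : HasDerivAt (fun u : ℝ => 1 - Real.exp (-u)) (Real.exp (-u)) u := by
    have := ((hasDerivAt_neg u).exp).const_sub (1 : ℝ)
    simpa using this
  have h2 : HasDerivAt (fun u : ℝ => (1 - Real.exp (-u)) ^ (p + 1))
      ((p + 1 : ℕ) * (1 - Real.exp (-u)) ^ p * Real.exp (-u)) u := by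
    simpa using h1.fun_pow (p + 1)
  have h3 : HasDerivAt (fun u : ℝ => Real.exp (-((n : ℝ) - (p + 1)) * u))
      (-((n : ℝ) - (p + 1)) * Real.exp (-((n : ℝ) - (p + 1)) * u)) u := by
    have := ((hasDerivAt_id u).const_mul (-((n : ℝ) - (p + 1)))).exp
    simpa [mul_comm] using this
  have h4 := (h2.mul h3).const_mul (n.choose (p + 1) : ℝ)
  refine h4.congr_deriv ?_
  have hch : ((p : ℝ) + 2) * (n.choose (p + 2) : ℝ) = ((n : ℝ) - (p + 1)) * (n.choose (p + 1) : ℝ) := by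
    have := Nat.choose_succ_right_eq n (p + 1)
    have hcast : ((n.choose (p + 2) * (p + 2) : ℕ) : ℝ) = ((n.choose (p + 1) * (n - (p + 1)) : ℕ) : ℝ) := by
      exact_mod_cast congrArg (Nat.cast : ℕ → ℝ) this
    push_cast [Nat.cast_sub h] at hcast
    linarith
  unfold amsDensity
  have e1 : Real.exp (-((n : ℝ) - (p + 1) + 1) * u)
      = Real.exp (-u) * Real.exp (-((n : ℝ) - (p + 1)) * u) := by
    rw [← Real.exp_add]; ring_nf
  have e2 : Real.exp (-((n : ℝ) - (p + 2) + 1) * u)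
      = Real.exp (-((n : ℝ) - (p + 1)) * u) := by
    ring_nf
  push_cast
  simp only [sub_zero]
  rw [e1, e2, hch]
  ring

lemma amsCDF_sub (n ℓ : ℕ) (h : ℓ < n) (a x : ℝ) :
    amsCDF n ℓ a x - amsCDF n (ℓ + 1) a x
      = (n.choose ℓ : ℝ) * ((1 - Real.exp (-(a - x))) ^ ℓ * Real.exp (-((n : ℝ) - ℓ) * (a - x))) := by
  rcases ℓ with _ | p
  · -- ℓ = 0
    have hint : ∫ u in (0:ℝ)..(a - x), amsDensity n 1 0 u
        = (1 - Real.exp (-((n : ℝ) - 0) * (a - x))) := by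
      have hder : ∀ u ∈ Set.uIcc (0:ℝ) (a - x),
          HasDerivAt (fun u : ℝ => -Real.exp (-(n : ℝ) * u)) (amsDensity n 1 0 u) u := by
        intro u _
        have := (((hasDerivAt_id u).const_mul (-(n : ℝ))).exp).neg
        refine this.congr_deriv ?_
        unfold amsDensity
        simp only [pow_zero, sub_zero, mul_one, Nat.cast_one, Nat.choose_one_right, id_eq]
        ring_nf
      have := intervalIntegral.integral_eq_sub_of_hasDerivAt hder
        ((continuous_amsDensity n 1 0).intervalIntegrable _ _)
      rw [this]
      simp only [mul_zero, Real.exp_zero, neg_zero, sub_zero]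
      ring_nf
    have h0 : amsCDF n 0 a x = 1 := by simp [amsCDF]
    have h1 : amsCDF n 1 a x = ∫ u in (0:ℝ)..(a - x), amsDensity n 1 0 u := by simp [amsCDF]
    rw [h0, h1, hint]
    simp only [Nat.choose_zero_right, Nat.cast_one, Nat.cast_zero, pow_zero, one_mul, sub_zero]
    ring_nf
  · -- ℓ = p + 1
    have hible : ∀ m : ℕ, IntervalIntegrable (amsDensity n m 0) MeasureTheory.volume 0 (a - x) :=
      fun m => (continuous_amsDensity n m 0).intervalIntegrable _ _
    have e0 : amsCDF n (p + 1) a x - amsCDF n (p + 2) a x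
        = ∫ u in (0:ℝ)..(a - x), (amsDensity n (p + 1) 0 u - amsDensity n (p + 2) 0 u) := by
      rw [amsCDF, amsCDF, if_neg (Nat.succ_ne_zero p), if_neg (Nat.succ_ne_zero (p + 1)),
        intervalIntegral.integral_sub (hible _) (hible _)]
    rw [e0]
    have hder := fun u (_ : u ∈ Set.uIcc (0:ℝ) (a - x)) => hasDerivAt_phi n p (by omega) u
    rw [intervalIntegral.integral_eq_sub_of_hasDerivAt hder ((hible _).sub (hible _))]
    simp only [Real.exp_zero, neg_zero, mul_zero, sub_zero]
    push_cast
    ring_nf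


/-- `Θ_{n,k}(λ;x) = Σ_{ℓ=0}^{k−1} (1−ℓ/n)^{nλ}·(F_{n,ℓ}(a;x) − F_{n,ℓ+1}(a;x))`. -/
noncomputable def amsTheta (n k : ℕ) (a l x : ℝ) : ℝ :=
  ∑ ℓ ∈ Finset.range k, (1 - (ℓ : ℝ) / n) ^ ((n : ℝ) * l) *
    (amsCDF n ℓ a x - amsCDF n (ℓ + 1) a x)

/-- Binomial expansion of the CDF difference into pure exponentials of `x - a`. -/
lemma amsTheta_eq (n k : ℕ) (h : k ≤ n) (a l : ℝ) :
    (fun x => amsTheta n k a l x)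
      = fun x => ∑ ℓ ∈ Finset.range k, (1 - (ℓ : ℝ) / n) ^ ((n : ℝ) * l) *
          ∑ j ∈ Finset.range (ℓ + 1),
            ((n.choose ℓ : ℝ) * (ℓ.choose j : ℝ) * (-1 : ℝ) ^ j) *
              Real.exp (((n : ℝ) - ℓ + j) * (x - a)) := by
  funext x
  unfold amsTheta
  refine Finset.sum_congr rfl fun ℓ hℓ => ?_
  have hℓn : ℓ < n := lt_of_lt_of_le (Finset.mem_range.mp hℓ) h
  rw [amsCDF_sub n ℓ hℓn a x]
  congr 1
  have hbin : (1 - Real.exp (-(a - x))) ^ ℓ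
      = ∑ j ∈ Finset.range (ℓ + 1),
          (-1 : ℝ) ^ j * Real.exp (-(a - x)) ^ j * (ℓ.choose j : ℝ) := by
    have := add_pow (-Real.exp (-(a - x))) 1 ℓ
    simp only [one_pow, mul_one] at this
    rw [show (1 - Real.exp (-(a - x))) = -Real.exp (-(a - x)) + 1 by ring, this]
    exact Finset.sum_congr rfl fun j _ => by rw [neg_pow]
  rw [hbin, Finset.sum_mul, Finset.mul_sum]
  refine Finset.sum_congr rfl fun j _ => ?_
  have he : Real.exp (-(a - x)) ^ j * Real.exp (-((n : ℝ) - ℓ) * (a - x))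
      = Real.exp (((n : ℝ) - ℓ + j) * (x - a)) := by
    rw [← Real.exp_nat_mul, ← Real.exp_add]
    congr 1
    ring
  rw [← he]
  ring

/-- Iterated derivative of a finite sum of exponentials. -/
lemma iteratedDeriv_exp_sum {ι : Type*} (s : Finset ι) (c r : ι → ℝ) (a : ℝ) (m : ℕ) :
    iteratedDeriv m (fun x : ℝ => ∑ i ∈ s, c i * Real.exp (r i * (x - a)))
      = fun x => ∑ i ∈ s, c i * r i ^ m * Real.exp (r i * (x - a)) := by
  induction m with
  | zero => simp [iteratedDeriv_zero]
  | succ m ih =>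
    rw [iteratedDeriv_succ, ih]
    funext x
    have hd : ∀ i ∈ s, HasDerivAt (fun x : ℝ => c i * r i ^ m * Real.exp (r i * (x - a)))
        (c i * r i ^ (m + 1) * Real.exp (r i * (x - a))) x := by
      intro i _
      have h1 : HasDerivAt (fun x : ℝ => r i * (x - a)) (r i) x := by
        simpa using ((hasDerivAt_id x).sub_const a).const_mul (r i)
      have := h1.exp.const_mul (c i * r i ^ m)
      refine this.congr_deriv ?_
      ring
    exact (HasDerivAt.fun_sum hd).deriv

lemma theta_iteratedDeriv (n k : ℕ) (h : k ≤ n) (a l : ℝ) (m : ℕ) :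
    iteratedDeriv m (fun x => amsTheta n k a l x) a
      = ∑ ℓ ∈ Finset.range k, (1 - (ℓ : ℝ) / n) ^ ((n : ℝ) * l) *
          ∑ j ∈ Finset.range (ℓ + 1),
            (n.choose ℓ : ℝ) * (ℓ.choose j : ℝ) * (-1 : ℝ) ^ j * ((n : ℝ) - ℓ + j) ^ m := by
  have hfun : (fun x => amsTheta n k a l x)
      = fun x => ∑ p ∈ (Finset.range k).sigma (fun ℓ => Finset.range (ℓ + 1)),
          ((1 - (p.1 : ℝ) / n) ^ ((n : ℝ) * l) *
            ((n.choose p.1 : ℝ) * (p.1.choose p.2 : ℝ) * (-1 : ℝ) ^ p.2)) *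
            Real.exp (((n : ℝ) - p.1 + p.2) * (x - a)) := by
    rw [amsTheta_eq n k h a l]
    funext x
    rw [Finset.sum_sigma]
    exact Finset.sum_congr rfl fun ℓ _ => by
      rw [Finset.mul_sum]
      exact Finset.sum_congr rfl fun j _ => by ring
  rw [hfun, iteratedDeriv_exp_sum]
  simp only [sub_self, mul_zero, Real.exp_zero, mul_one]
  rw [Finset.sum_sigma]
  exact Finset.sum_congr rfl fun ℓ _ => by
    rw [Finset.mul_sum]
    exact Finset.sum_congr rfl fun j _ => by ring

/-- `amsS ℓ i = ∑_{j=0}^{ℓ} (-1)^j C(ℓ,j) j^i`. -/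
noncomputable def amsS (ℓ i : ℕ) : ℝ :=
  ∑ j ∈ Finset.range (ℓ + 1), (-1 : ℝ) ^ j * (ℓ.choose j : ℝ) * (j : ℝ) ^ i

lemma amsS_rec (ℓ i : ℕ) :
    amsS (ℓ + 1) i = amsS ℓ i - ∑ s ∈ Finset.range (i + 1), (i.choose s : ℝ) * amsS ℓ s := by
  have hsplit : ∀ j ∈ Finset.range (ℓ + 1),
      (-1 : ℝ) ^ (j + 1) * ((ℓ + 1).choose (j + 1) : ℝ) * ((j + 1 : ℕ) : ℝ) ^ i
        = (-1 : ℝ) ^ (j + 1) * (ℓ.choose (j + 1) : ℝ) * ((j + 1 : ℕ) : ℝ) ^ i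
          + (-1 : ℝ) ^ (j + 1) * (ℓ.choose j : ℝ) * (((j : ℝ) + 1)) ^ i := by
    intro j _
    rw [Nat.choose_succ_succ']
    push_cast
    ring
  have e1 : amsS (ℓ + 1) i
      = (∑ j ∈ Finset.range (ℓ + 1),
            ((-1 : ℝ) ^ (j + 1) * (ℓ.choose (j + 1) : ℝ) * ((j + 1 : ℕ) : ℝ) ^ i
              + (-1 : ℝ) ^ (j + 1) * (ℓ.choose j : ℝ) * ((j : ℝ) + 1) ^ i))
          + (0 : ℝ) ^ i := by
    rw [amsS, Finset.sum_range_succ']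
    simp only [pow_zero, one_mul, Nat.choose_zero_right, Nat.cast_one, Nat.cast_zero]
    rw [Finset.sum_congr rfl hsplit]
  have hA : (∑ j ∈ Finset.range (ℓ + 1),
        (-1 : ℝ) ^ (j + 1) * (ℓ.choose (j + 1) : ℝ) * ((j + 1 : ℕ) : ℝ) ^ i) + (0 : ℝ) ^ i
      = amsS ℓ i := by
    rw [Finset.sum_range_succ, Nat.choose_succ_self ℓ]
    rw [amsS, Finset.sum_range_succ']
    simp only [Nat.cast_zero, Nat.choose_zero_right, Nat.cast_one, pow_zero, one_mul,
      Nat.cast_zero, mul_zero, zero_mul, add_zero]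
  have hB : (∑ j ∈ Finset.range (ℓ + 1),
        (-1 : ℝ) ^ (j + 1) * (ℓ.choose j : ℝ) * ((j : ℝ) + 1) ^ i)
      = - ∑ s ∈ Finset.range (i + 1), (i.choose s : ℝ) * amsS ℓ s := by
    have hb : ∀ j ∈ Finset.range (ℓ + 1),
        (-1 : ℝ) ^ (j + 1) * (ℓ.choose j : ℝ) * ((j : ℝ) + 1) ^ i
          = ∑ s ∈ Finset.range (i + 1),
              -((i.choose s : ℝ) * ((-1 : ℝ) ^ j * (ℓ.choose j : ℝ) * (j : ℝ) ^ s)) := by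
      intro j _
      rw [add_pow, Finset.mul_sum]
      refine Finset.sum_congr rfl fun s _ => ?_
      simp only [one_pow, pow_succ]
      ring
    have hc : ∀ s ∈ Finset.range (i + 1),
        (∑ j ∈ Finset.range (ℓ + 1),
            -((i.choose s : ℝ) * ((-1 : ℝ) ^ j * (ℓ.choose j : ℝ) * (j : ℝ) ^ s)))
          = -((i.choose s : ℝ) * amsS ℓ s) := by
      intro s _
      rw [Finset.sum_neg_distrib, amsS, Finset.mul_sum]
    rw [Finset.sum_congr rfl hb, Finset.sum_comm, Finset.sum_congr rfl hc,
      Finset.sum_neg_distrib]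
  calc amsS (ℓ + 1) i
      = ((∑ j ∈ Finset.range (ℓ + 1),
            (-1 : ℝ) ^ (j + 1) * (ℓ.choose (j + 1) : ℝ) * ((j + 1 : ℕ) : ℝ) ^ i) + (0 : ℝ) ^ i)
        + (∑ j ∈ Finset.range (ℓ + 1),
            (-1 : ℝ) ^ (j + 1) * (ℓ.choose j : ℝ) * ((j : ℝ) + 1) ^ i) := by
        rw [e1, Finset.sum_add_distrib]; ring
    _ = amsS ℓ i - ∑ s ∈ Finset.range (i + 1), (i.choose s : ℝ) * amsS ℓ s := by
        rw [hA, hB]; ring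

lemma amsS_eq_zero {ℓ i : ℕ} (h : i < ℓ) : amsS ℓ i = 0 := by
  induction ℓ generalizing i with
  | zero => omega
  | succ ℓ ih =>
    rw [amsS_rec]
    rcases Nat.lt_or_ge i ℓ with hi | hi
    · rw [ih hi]
      have : ∀ s ∈ Finset.range (i + 1), (i.choose s : ℝ) * amsS ℓ s = 0 := fun s hs => by
        rw [ih (lt_of_lt_of_le (Finset.mem_range.mp hs) (by omega)), mul_zero]
      rw [Finset.sum_congr rfl this]
      simp
    · have hiℓ : i = ℓ := by omega
      subst hiℓ
      rw [Finset.sum_range_succ, Nat.choose_self]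
      have : ∀ s ∈ Finset.range i, (i.choose s : ℝ) * amsS i s = 0 := fun s hs => by
        rw [ih (Finset.mem_range.mp hs), mul_zero]
      rw [Finset.sum_congr rfl this]
      simp

lemma amsS_self (ℓ : ℕ) : amsS ℓ ℓ = (-1 : ℝ) ^ ℓ * (ℓ.factorial : ℝ) := by
  induction ℓ with
  | zero => simp [amsS]
  | succ ℓ ih =>
    rw [amsS_rec, Finset.sum_range_succ, Finset.sum_range_succ, Nat.choose_self]
    have h1 : ∀ s ∈ Finset.range ℓ, ((ℓ + 1).choose s : ℝ) * amsS ℓ s = 0 := fun s hs => by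
      rw [amsS_eq_zero (Finset.mem_range.mp hs), mul_zero]
    rw [Finset.sum_congr rfl h1, Nat.choose_succ_self_right]
    simp only [Finset.sum_const_zero, zero_add, one_mul]
    rw [ih, Nat.factorial_succ]
    push_cast
    ring

/-- Rearranging the inner sum using `amsS`. -/
lemma inner_rearrange (n ℓ m : ℕ) :
    (∑ j ∈ Finset.range (ℓ + 1),
        (n.choose ℓ : ℝ) * (ℓ.choose j : ℝ) * (-1 : ℝ) ^ j * ((n : ℝ) - ℓ + j) ^ m) / (n : ℝ) ^ m
      = ∑ i ∈ Finset.range (m + 1), (m.choose i : ℝ) * amsS ℓ i *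
          ((n.choose ℓ : ℝ) * ((n : ℝ) - ℓ) ^ (m - i) / (n : ℝ) ^ m) := by
  have hexp : ∀ j ∈ Finset.range (ℓ + 1),
      (n.choose ℓ : ℝ) * (ℓ.choose j : ℝ) * (-1 : ℝ) ^ j * ((n : ℝ) - ℓ + j) ^ m
        = ∑ i ∈ Finset.range (m + 1),
            (m.choose i : ℝ) * ((-1 : ℝ) ^ j * (ℓ.choose j : ℝ) * (j : ℝ) ^ i) *
              ((n.choose ℓ : ℝ) * ((n : ℝ) - ℓ) ^ (m - i)) := by
    intro j _
    rw [show ((n : ℝ) - ℓ + j) = ((j : ℝ) + ((n : ℝ) - ℓ)) by ring, add_pow, Finset.mul_sum]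
    exact Finset.sum_congr rfl fun i _ => by ring
  rw [Finset.sum_congr rfl hexp, Finset.sum_comm, Finset.sum_div]
  refine Finset.sum_congr rfl fun i _ => ?_
  rw [amsS, Finset.sum_div, Finset.mul_sum, Finset.sum_mul]
  refine Finset.sum_congr rfl fun j _ => ?_
  ring

lemma tendsto_choose_div_pow (ℓ : ℕ) :
    Tendsto (fun n : ℕ => (n.choose ℓ : ℝ) / (n : ℝ) ^ ℓ) atTop (𝓝 (1 / (ℓ.factorial : ℝ))) := by
  have hp : Tendsto (fun n : ℕ => ∏ i ∈ Finset.range ℓ, (1 - (i : ℝ) / n)) atTop (𝓝 1) := by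
    have := tendsto_finset_prod (Finset.range ℓ)
      (fun i _ => ((tendsto_const_div_atTop_nhds_zero_nat (i : ℝ)).const_sub 1))
    simpa using this
  have h2 := hp.const_mul (1 / (ℓ.factorial : ℝ))
  rw [mul_one] at h2
  refine h2.congr' ?_
  filter_upwards [eventually_ge_atTop (max ℓ 1)] with n hn
  have hnℓ : ℓ ≤ n := le_trans (le_max_left _ _) hn
  have hn0 : (n : ℝ) ≠ 0 := Nat.cast_ne_zero.mpr (by omega)
  have hfac : (ℓ.factorial : ℝ) ≠ 0 := Nat.cast_ne_zero.mpr ℓ.factorial_ne_zero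
  have hd : (ℓ.factorial : ℝ) * (n.choose ℓ : ℝ) = ∏ i ∈ Finset.range ℓ, ((n : ℝ) - i) := by
    have h1 := Nat.descFactorial_eq_factorial_mul_choose n ℓ
    have h2' := Nat.descFactorial_eq_prod_range n ℓ
    calc (ℓ.factorial : ℝ) * (n.choose ℓ : ℝ) = ((ℓ.factorial * n.choose ℓ : ℕ) : ℝ) := by push_cast; ring
      _ = ((n.descFactorial ℓ : ℕ) : ℝ) := by rw [← h1]
      _ = ∏ i ∈ Finset.range ℓ, ((n : ℝ) - i) := by
          rw [h2', Nat.cast_prod]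
          exact Finset.prod_congr rfl fun i hi =>
            Nat.cast_sub (le_trans (Nat.le_of_lt (Finset.mem_range.mp hi)) hnℓ)
  have hpow : (n : ℝ) ^ ℓ = ∏ _i ∈ Finset.range ℓ, (n : ℝ) := by
    rw [Finset.prod_const, Finset.card_range]
  have hprod : ∏ i ∈ Finset.range ℓ, (1 - (i : ℝ) / n)
      = (∏ i ∈ Finset.range ℓ, ((n : ℝ) - i)) / (n : ℝ) ^ ℓ := by
    rw [hpow, ← Finset.prod_div_distrib]
    exact Finset.prod_congr rfl fun i _ => by field_simp
  rw [hprod, ← hd]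
  field_simp

lemma tendsto_aux (ℓ i m : ℕ) (hi : i ≤ m) (hℓ : ℓ ≤ i) :
    Tendsto (fun n : ℕ => (n.choose ℓ : ℝ) * ((n : ℝ) - ℓ) ^ (m - i) / (n : ℝ) ^ m) atTop
      (𝓝 (1 / (ℓ.factorial : ℝ) * 1 * (0 : ℝ) ^ (i - ℓ))) := by
  have h1 := tendsto_choose_div_pow ℓ
  have hb : Tendsto (fun n : ℕ => ((n : ℝ) - ℓ) / n) atTop (𝓝 1) := by
    have := (tendsto_const_div_atTop_nhds_zero_nat (ℓ : ℝ)).const_sub 1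
    rw [sub_zero] at this
    refine this.congr' ?_
    filter_upwards [eventually_ge_atTop 1] with n hn
    have hn0 : (n : ℝ) ≠ 0 := Nat.cast_ne_zero.mpr (by omega)
    field_simp
  have h2 : Tendsto (fun n : ℕ => (((n : ℝ) - ℓ) / n) ^ (m - i)) atTop (𝓝 1) := by
    simpa using hb.pow (m - i)
  have h3 : Tendsto (fun n : ℕ => (1 / (n : ℝ)) ^ (i - ℓ)) atTop (𝓝 ((0 : ℝ) ^ (i - ℓ))) :=
    tendsto_one_div_atTop_nhds_zero_nat.pow (i - ℓ)
  have h := (h1.mul h2).mul h3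
  refine h.congr' ?_
  filter_upwards [eventually_ge_atTop 1] with n hn
  have hn0 : (n : ℝ) ≠ 0 := Nat.cast_ne_zero.mpr (by omega)
  have hpow : (n : ℝ) ^ ℓ * (n : ℝ) ^ (m - i) * (n : ℝ) ^ (i - ℓ) = (n : ℝ) ^ m := by
    rw [← pow_add, ← pow_add]
    congr 1
    omega
  rw [div_pow, div_pow, one_pow, div_mul_div_comm, div_mul_div_comm, hpow]
  ring

lemma tendsto_W (ℓ m : ℕ) :
    Tendsto (fun n : ℕ => ∑ i ∈ Finset.range (m + 1), (m.choose i : ℝ) * amsS ℓ i *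
        ((n.choose ℓ : ℝ) * ((n : ℝ) - ℓ) ^ (m - i) / (n : ℝ) ^ m)) atTop
      (𝓝 ((-1 : ℝ) ^ ℓ * (m.choose ℓ : ℝ))) := by
  have hterm : ∀ i ∈ Finset.range (m + 1),
      Tendsto (fun n : ℕ => (m.choose i : ℝ) * amsS ℓ i *
          ((n.choose ℓ : ℝ) * ((n : ℝ) - ℓ) ^ (m - i) / (n : ℝ) ^ m)) atTop
        (𝓝 (if i = ℓ then (-1 : ℝ) ^ ℓ * (m.choose ℓ : ℝ) else 0)) := by
    intro i hi
    have him : i ≤ m := by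
      have := Finset.mem_range.mp hi; omega
    rcases lt_trichotomy i ℓ with hc | hc | hc
    · rw [if_neg (by omega), amsS_eq_zero hc]
      simp only [mul_zero, zero_mul]
      exact tendsto_const_nhds
    · subst hc
      rw [if_pos rfl]
      have h := (tendsto_aux i i m him le_rfl).const_mul ((m.choose i : ℝ) * amsS i i)
      have hfac : (i.factorial : ℝ) ≠ 0 := Nat.cast_ne_zero.mpr i.factorial_ne_zero
      have hval : (m.choose i : ℝ) * amsS i i * (1 / (i.factorial : ℝ) * 1 * (0 : ℝ) ^ (i - i))
          = (-1 : ℝ) ^ i * (m.choose i : ℝ) := by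
        rw [amsS_self, Nat.sub_self, pow_zero]
        field_simp
      rw [← hval]
      exact h.congr fun n => by ring
    · rw [if_neg (by omega)]
      have h := (tendsto_aux ℓ i m him (le_of_lt hc)).const_mul ((m.choose i : ℝ) * amsS ℓ i)
      have hval : (m.choose i : ℝ) * amsS ℓ i * (1 / (ℓ.factorial : ℝ) * 1 * (0 : ℝ) ^ (i - ℓ))
          = 0 := by
        rw [zero_pow (by omega : i - ℓ ≠ 0)]
        ring
      rw [← hval]
      exact h.congr fun n => by ring
  have h := tendsto_finset_sum (Finset.range (m + 1)) hterm
  have hsum : (∑ i ∈ Finset.range (m + 1),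
      (if i = ℓ then (-1 : ℝ) ^ ℓ * (m.choose ℓ : ℝ) else 0))
        = (-1 : ℝ) ^ ℓ * (m.choose ℓ : ℝ) := by
    rw [Finset.sum_ite_eq' (Finset.range (m + 1)) ℓ (fun _ => (-1 : ℝ) ^ ℓ * (m.choose ℓ : ℝ))]
    split_ifs with hmem
    · rfl
    · rw [Nat.choose_eq_zero_of_lt (by simp [Finset.mem_range] at hmem; omega)]
      simp
  rwa [hsum] at h

lemma tendsto_rpow_coef (c : ℕ) (l : ℝ) :
    Tendsto (fun n : ℕ => (1 - (c : ℝ) / n) ^ ((n : ℝ) * l)) atTop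
      (𝓝 (Real.exp (-(c : ℝ) * l))) := by
  have h1 : Tendsto (fun n : ℕ => (1 + -(c : ℝ) / n) ^ (n : ℝ)) atTop
      (𝓝 (Real.exp (-(c : ℝ)))) := by
    have := (Real.tendsto_one_add_div_rpow_exp (-(c : ℝ))).comp
      (tendsto_natCast_atTop_atTop (R := ℝ))
    exact this
  have h2 : ContinuousAt (fun x : ℝ => x ^ l) (Real.exp (-(c : ℝ))) :=
    Real.continuousAt_rpow_const _ l (Or.inl (Real.exp_pos _).ne')
  have h3 := h2.tendsto.comp h1
  rw [← Real.exp_mul] at h3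
  refine h3.congr' ?_
  filter_upwards [eventually_ge_atTop (c + 1)] with n hn
  have hnpos : (0 : ℝ) < n := by exact_mod_cast (by omega : 0 < n)
  have hcn : (c : ℝ) / n ≤ 1 := by
    rw [div_le_one hnpos]
    exact_mod_cast le_trans (Nat.le_succ c) hn
  have hpos : (0 : ℝ) ≤ 1 + -(c : ℝ) / n := by rw [neg_div, ← sub_eq_add_neg]; linarith [hcn]
  show ((1 + -(c : ℝ) / n) ^ (n : ℝ)) ^ l = (1 - (c : ℝ) / n) ^ ((n : ℝ) * l)
  rw [← Real.rpow_mul hpos, neg_div, ← sub_eq_add_neg]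

lemma final_sum (k m : ℕ) (hk : m + 1 ≤ k) (l : ℝ) :
    ∑ ℓ ∈ Finset.range k, Real.exp (-(ℓ : ℝ) * l) * ((-1 : ℝ) ^ ℓ * (m.choose ℓ : ℝ))
      = (1 - Real.exp (-l)) ^ m := by
  rw [← Finset.sum_subset (Finset.range_subset_range.mpr hk) (fun x _ hx => by
    rw [Nat.choose_eq_zero_of_lt (by simp [Finset.mem_range] at hx; omega)]
    simp)]
  rw [show (1 - Real.exp (-l)) = -Real.exp (-l) + 1 by ring, add_pow]
  refine Finset.sum_congr rfl fun ℓ _ => ?_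
  rw [neg_pow (Real.exp (-l)) ℓ, ← Real.exp_nat_mul, show (ℓ : ℝ) * (-l) = -(ℓ : ℝ) * l by ring]
  simp only [one_pow, mul_one]
  ring


/-- For `0 ≤ m ≤ k−1`, `n^{−m}·(d^m/dx^m)Θ_{n,k}(λ;x)|_{x=a} → (1 − exp(−λ))^m`
as `n → ∞`. -/
theorem tendsto_deriv_amsTheta (a : ℝ) (ha : 0 < a) (k : ℕ) (hk : 1 ≤ k)
    (l : ℝ) (m : ℕ) (hm : m ≤ k - 1) :
    Tendsto (fun n : ℕ =>
      (1 / (n : ℝ) ^ m) * iteratedDeriv m (fun x => amsTheta n k a l x) a)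
      atTop (nhds ((1 - Real.exp (-l)) ^ m)) := by
  have hk' : m + 1 ≤ k := by omega
  have hsum : Tendsto (fun n : ℕ => ∑ ℓ ∈ Finset.range k,
      (1 - (ℓ : ℝ) / n) ^ ((n : ℝ) * l) *
        ∑ i ∈ Finset.range (m + 1), (m.choose i : ℝ) * amsS ℓ i *
          ((n.choose ℓ : ℝ) * ((n : ℝ) - ℓ) ^ (m - i) / (n : ℝ) ^ m)) atTop
      (𝓝 (∑ ℓ ∈ Finset.range k,
        Real.exp (-(ℓ : ℝ) * l) * ((-1 : ℝ) ^ ℓ * (m.choose ℓ : ℝ)))) :=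
    tendsto_finset_sum _ fun ℓ _ => (tendsto_rpow_coef ℓ l).mul (tendsto_W ℓ m)
  rw [final_sum k m hk' l] at hsum
  refine hsum.congr' ?_
  filter_upwards [eventually_ge_atTop (k + 1)] with n hn
  rw [theta_iteratedDeriv n k (by omega) a l m, Finset.mul_sum]
  refine Finset.sum_congr rfl fun ℓ _ => ?_
  rw [← inner_rearrange n ℓ m]
  ring
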